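/- Let a < c < b be real numbers, let ν ∈ (0, 1], H ≥ 0, and let ψ : ℝ → ℝ be continuous on [a, b] with |ψ(x) − ψ(c)| ≤ H·|x − c|^ν for all x ∈ [a, b]. Set I = ∫_a^b ψ(x)·(2x−a−b)/(b−a) dx − ∫_a^c ψ(x)·(2x−a−c)/(c−a) dx − ∫_c^b ψ(x)·(2x−c−b)/(b−c) dx. Then |I| ≤ 2·H·((c−a)(b−c)/(b−a))·(b−a)^ν. -/

import Mathlib

open intervalIntegral MeasureTheory Set

/-- The symmetric linear weight integrates to zero. -/
lemma aux_weight_int (p q : ℝ) : ∫ x in p..q, (2 * x - p - q) = 0 := by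
  have h : (fun x : ℝ => 2 * x - p - q) = fun x : ℝ => 2 * x - (p + q) := by
    ext x; ring
  rw [h, intervalIntegral.integral_sub (intervalIntegrable_id.const_mul 2)
      intervalIntegrable_const, intervalIntegral.integral_const_mul,
      integral_id, intervalIntegral.integral_const, smul_eq_mul]
  ring

lemma aux_weight_int_div (p q r : ℝ) : ∫ x in p..q, (2 * x - p - q) / r = 0 := by
  rw [intervalIntegral.integral_div, aux_weight_int, zero_div]

lemma aux_linear_int (p q : ℝ) : ∫ x in p..q, (x - p) = (q - p) ^ 2 / 2 := by
  rw [intervalIntegral.integral_sub intervalIntegrable_id intervalIntegrable_const,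
      integral_id, intervalIntegral.integral_const, smul_eq_mul]
  ring

set_option maxHeartbeats 1600000 in
/-- the Hölder-continuity estimate for the triangle contribution `I`. -/
theorem triangle_integral_holder_bound
    (a b c : ℝ) (hac : a < c) (hcb : c < b)
    (ν : ℝ) (hν : ν ∈ Set.Ioc (0 : ℝ) 1) (H : ℝ) (hH : 0 ≤ H)
    (ψ : ℝ → ℝ) (hψ : ContinuousOn ψ (Set.Icc a b))
    (hψH : ∀ x ∈ Set.Icc a b, |ψ x - ψ c| ≤ H * |x - c| ^ ν)
    (I : ℝ)
    (hI : I = (∫ x in a..b, ψ x * ((2 * x - a - b) / (b - a))) -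
      (∫ x in a..c, ψ x * ((2 * x - a - c) / (c - a))) -
      (∫ x in c..b, ψ x * ((2 * x - c - b) / (b - c)))) :
    |I| ≤ 2 * H * ((c - a) * (b - c) / (b - a)) * (b - a) ^ ν := by
  obtain ⟨hν0, hν1⟩ := hν
  have hab : a < b := hac.trans hcb
  have hba : (0:ℝ) < b - a := by linarith
  have hca : (0:ℝ) < c - a := by linarith
  have hbc : (0:ℝ) < b - c := by linarith
  set K := ψ c with hK
  set g : ℝ → ℝ := fun x => ψ x - K with hg
  set M := H * (b - a) ^ ν with hM
  have hM0 : 0 ≤ M := by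
    apply mul_nonneg hH
    positivity
  -- Hölder bound gives uniform bound M on g over [a,b]
  have hgbd : ∀ x ∈ Set.Icc a b, |g x| ≤ M := by
    intro x hx
    refine (hψH x hx).trans ?_
    refine mul_le_mul_of_nonneg_left ?_ hH
    refine Real.rpow_le_rpow (abs_nonneg _) ?_ hν0.le
    rw [abs_le]
    constructor <;> [linarith [hx.1]; linarith [hx.2]]
  -- continuity / integrability facts
  have hgc : ContinuousOn g (Set.Icc a b) := hψ.sub continuousOn_const
  have hw1 : Continuous fun x : ℝ => (2 * x - a - b) / (b - a) :=
    (by fun_prop : Continuous fun x : ℝ => 2 * x - a - b).div_const _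
  have hw2 : Continuous fun x : ℝ => (2 * x - a - c) / (c - a) :=
    (by fun_prop : Continuous fun x : ℝ => 2 * x - a - c).div_const _
  have hw3 : Continuous fun x : ℝ => (2 * x - c - b) / (b - c) :=
    (by fun_prop : Continuous fun x : ℝ => 2 * x - c - b).div_const _
  have hsub1 : Set.uIcc a c ⊆ Set.Icc a b := by
    rw [Set.uIcc_of_le hac.le]
    exact Set.Icc_subset_Icc le_rfl hcb.le
  have hsub2 : Set.uIcc c b ⊆ Set.Icc a b := by
    rw [Set.uIcc_of_le hcb.le]
    exact Set.Icc_subset_Icc hac.le le_rfl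
  have hsub0 : Set.uIcc a b ⊆ Set.Icc a b := by rw [Set.uIcc_of_le hab.le]
  have hint : ∀ (w : ℝ → ℝ), Continuous w →
      IntervalIntegrable (fun x => g x * w x) volume a b ∧
      IntervalIntegrable (fun x => g x * w x) volume a c ∧
      IntervalIntegrable (fun x => g x * w x) volume c b := by
    intro w hw
    refine ⟨((hgc.mono hsub0).mul (hw.continuousOn)).intervalIntegrable,
      ((hgc.mono hsub1).mul (hw.continuousOn)).intervalIntegrable,
      ((hgc.mono hsub2).mul (hw.continuousOn)).intervalIntegrable⟩
  -- replace ψ by g in each integral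
  have key : ∀ (p q : ℝ) (r : ℝ), IntervalIntegrable (fun x => g x * ((2 * x - p - q) / r)) volume p q →
      (∫ x in p..q, ψ x * ((2 * x - p - q) / r)) =
      ∫ x in p..q, g x * ((2 * x - p - q) / r) := by
    intro p q r hintg
    have h2 : IntervalIntegrable (fun x => K * ((2 * x - p - q) / r)) volume p q :=
      ((continuous_const.mul ((by fun_prop : Continuous fun x : ℝ => 2 * x - p - q).div_const _))).intervalIntegrable _ _
    have : (fun x => ψ x * ((2 * x - p - q) / r)) =
        fun x => g x * ((2 * x - p - q) / r) + K * ((2 * x - p - q) / r) := by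
      ext x; simp [hg]; ring
    rw [this, intervalIntegral.integral_add hintg h2,
        intervalIntegral.integral_const_mul, aux_weight_int_div, mul_zero, add_zero]
  have e1 : (∫ x in a..b, ψ x * ((2 * x - a - b) / (b - a))) =
      ∫ x in a..b, g x * ((2 * x - a - b) / (b - a)) := key a b _ (hint _ hw1).1
  have e2 : (∫ x in a..c, ψ x * ((2 * x - a - c) / (c - a))) =
      ∫ x in a..c, g x * ((2 * x - a - c) / (c - a)) := key a c _ (hint _ hw2).2.1
  have e3 : (∫ x in c..b, ψ x * ((2 * x - c - b) / (b - c))) =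
      ∫ x in c..b, g x * ((2 * x - c - b) / (b - c)) := key c b _ (hint _ hw3).2.2
  -- split the first integral at c
  have esplit : (∫ x in a..b, g x * ((2 * x - a - b) / (b - a))) =
      (∫ x in a..c, g x * ((2 * x - a - b) / (b - a))) +
      ∫ x in c..b, g x * ((2 * x - a - b) / (b - a)) :=
    (intervalIntegral.integral_add_adjacent_intervals (hint _ hw1).2.1 (hint _ hw1).2.2).symm
  -- combine into two integrals A and B
  set A := ∫ x in a..c, g x * (-(2 * (b - c) * (x - a)) / ((b - a) * (c - a))) with hA
  set B := ∫ x in c..b, g x * (2 * (c - a) * (b - x) / ((b - a) * (b - c))) with hB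
  have eA : (∫ x in a..c, g x * ((2 * x - a - b) / (b - a))) -
      (∫ x in a..c, g x * ((2 * x - a - c) / (c - a))) = A := by
    rw [hA, ← intervalIntegral.integral_sub
      (hint _ hw1).2.1
      (hint _ hw2).2.1]
    apply intervalIntegral.integral_congr
    intro x _
    have : (2 * x - a - b) / (b - a) - (2 * x - a - c) / (c - a) =
        -(2 * (b - c) * (x - a)) / ((b - a) * (c - a)) := by
      field_simp
      ring
    simp only [← mul_sub, this]
  have eB : (∫ x in c..b, g x * ((2 * x - a - b) / (b - a))) -
      (∫ x in c..b, g x * ((2 * x - c - b) / (b - c))) = B := by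
    rw [hB, ← intervalIntegral.integral_sub
      (hint _ hw1).2.2
      (hint _ hw3).2.2]
    apply intervalIntegral.integral_congr
    intro x _
    have : (2 * x - a - b) / (b - a) - (2 * x - c - b) / (b - c) =
        2 * (c - a) * (b - x) / ((b - a) * (b - c)) := by
      field_simp
      ring
    simp only [← mul_sub, this]
  have hIAB : I = A + B := by
    rw [hI, e1, e2, e3, esplit]
    rw [← eA, ← eB]
    ring
  -- bound |A|
  have hintA : IntervalIntegrable
      (fun x => g x * (-(2 * (b - c) * (x - a)) / ((b - a) * (c - a)))) volume a c := by
    apply ContinuousOn.intervalIntegrable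
    exact (hgc.mono hsub1).mul
      ((by fun_prop : Continuous fun x : ℝ => -(2 * (b - c) * (x - a))).div_const _).continuousOn
  have hintAbd : IntervalIntegrable
      (fun x => M * (2 * (b - c) * (x - a) / ((b - a) * (c - a)))) volume a c := by
    apply ContinuousOn.intervalIntegrable
    exact (continuous_const.mul ((by fun_prop : Continuous fun x : ℝ => 2 * (b - c) * (x - a)).div_const _)).continuousOn
  have boundA : |A| ≤ M * ((b - c) * (c - a) / (b - a)) := by
    have h1 : |A| ≤ ∫ x in a..c,
        |g x * (-(2 * (b - c) * (x - a)) / ((b - a) * (c - a)))| :=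
      intervalIntegral.abs_integral_le_integral_abs hac.le
    have h2 : (∫ x in a..c,
        |g x * (-(2 * (b - c) * (x - a)) / ((b - a) * (c - a)))|) ≤
        ∫ x in a..c, M * (2 * (b - c) * (x - a) / ((b - a) * (c - a))) := by
      apply intervalIntegral.integral_mono_on hac.le hintA.abs hintAbd
      intro x hx
      have hx1 : a ≤ x := hx.1
      have hx2 : x ≤ c := hx.2
      have hxab : x ∈ Set.Icc a b := ⟨hx1, le_trans hx2 hcb.le⟩
      rw [abs_mul]
      have habs : |(-(2 * (b - c) * (x - a)) / ((b - a) * (c - a)))| =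
          2 * (b - c) * (x - a) / ((b - a) * (c - a)) := by
        rw [abs_div, abs_neg,
          abs_of_nonneg (by nlinarith : (0:ℝ) ≤ 2 * (b - c) * (x - a)),
          abs_of_nonneg (by nlinarith : (0:ℝ) ≤ (b - a) * (c - a))]
      rw [habs]
      exact mul_le_mul_of_nonneg_right (hgbd x hxab)
        (div_nonneg (by nlinarith) (by nlinarith))
    have h3 : (∫ x in a..c, M * (2 * (b - c) * (x - a) / ((b - a) * (c - a)))) =
        M * ((b - c) * (c - a) / (b - a)) := by
      have : (fun x : ℝ => M * (2 * (b - c) * (x - a) / ((b - a) * (c - a)))) =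
          fun x : ℝ => (M * (2 * (b - c)) / ((b - a) * (c - a))) * (x - a) := by
        ext x; field_simp
      rw [this, intervalIntegral.integral_const_mul, aux_linear_int]
      field_simp
    calc |A| ≤ _ := h1
      _ ≤ _ := h2
      _ = _ := h3
  -- bound |B|
  have hintB : IntervalIntegrable
      (fun x => g x * (2 * (c - a) * (b - x) / ((b - a) * (b - c)))) volume c b := by
    apply ContinuousOn.intervalIntegrable
    exact (hgc.mono hsub2).mul
      ((by fun_prop : Continuous fun x : ℝ => 2 * (c - a) * (b - x)).div_const _).continuousOn
  have hintBbd : IntervalIntegrable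
      (fun x => M * (2 * (c - a) * (b - x) / ((b - a) * (b - c)))) volume c b := by
    apply ContinuousOn.intervalIntegrable
    exact (continuous_const.mul ((by fun_prop : Continuous fun x : ℝ => 2 * (c - a) * (b - x)).div_const _)).continuousOn
  have boundB : |B| ≤ M * ((b - c) * (c - a) / (b - a)) := by
    have h1 : |B| ≤ ∫ x in c..b,
        |g x * (2 * (c - a) * (b - x) / ((b - a) * (b - c)))| :=
      intervalIntegral.abs_integral_le_integral_abs hcb.le
    have h2 : (∫ x in c..b,
        |g x * (2 * (c - a) * (b - x) / ((b - a) * (b - c)))|) ≤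
        ∫ x in c..b, M * (2 * (c - a) * (b - x) / ((b - a) * (b - c))) := by
      apply intervalIntegral.integral_mono_on hcb.le hintB.abs hintBbd
      intro x hx
      have hx1 : c ≤ x := hx.1
      have hx2 : x ≤ b := hx.2
      have hxab : x ∈ Set.Icc a b := ⟨le_trans hac.le hx1, hx2⟩
      rw [abs_mul]
      have habs : |(2 * (c - a) * (b - x) / ((b - a) * (b - c)))| =
          2 * (c - a) * (b - x) / ((b - a) * (b - c)) := by
        rw [abs_of_nonneg (div_nonneg (by nlinarith) (by nlinarith))]
      rw [habs]
      exact mul_le_mul_of_nonneg_right (hgbd x hxab)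
        (div_nonneg (by nlinarith) (by nlinarith))
    have h3 : (∫ x in c..b, M * (2 * (c - a) * (b - x) / ((b - a) * (b - c)))) =
        M * ((b - c) * (c - a) / (b - a)) := by
      have heq : (fun x : ℝ => M * (2 * (c - a) * (b - x) / ((b - a) * (b - c)))) =
          fun x : ℝ => (-(M * (2 * (c - a)) / ((b - a) * (b - c)))) * (x - b) := by
        ext x; field_simp; ring
      have hlin : ∫ x in c..b, (x - b) = -((b - c) ^ 2 / 2) := by
        rw [intervalIntegral.integral_symm b c, aux_linear_int]; ring
      rw [heq, intervalIntegral.integral_const_mul, hlin]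
      field_simp
    calc |B| ≤ _ := h1
      _ ≤ _ := h2
      _ = _ := h3
  -- conclude
  have : |I| ≤ |A| + |B| := hIAB ▸ abs_add_le A B
  have hfinal : |I| ≤ 2 * M * ((b - c) * (c - a) / (b - a)) := by linarith
  calc |I| ≤ 2 * M * ((b - c) * (c - a) / (b - a)) := hfinal
    _ = 2 * H * ((c - a) * (b - c) / (b - a)) * (b - a) ^ ν := by rw [hM]; ring
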